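/- Let λ₁ > 0, λ₂ > 0, α > 0 and θ ∈ [-1, 1], and for z, y > 0 let f_{Z,Y}(z,y) = λ₁λ₂ z e^{-(λ₁+λ₂y)z}(1 + θ(1 - 2e^{-λ₁z})(1 - 2e^{-λ₂yz})). Then for every x > 0, ∫₀^x ∫₀^α f_{Z,Y}(z,y) dy dz = λ₁{(1+θ)[(1-e^{-λ₁x})/λ₁ - (1-e^{-(λ₁+λ₂α)x})/(λ₁+λ₂α)] - θ[(1-e^{-λ₁x})/λ₁ - (1-e^{-(λ₁+2λ₂α)x})/(λ₁+2λ₂α)] - 2θ[(1-e^{-2λ₁x})/(2λ₁) - (1-e^{-(2λ₁+λ₂α)x})/(2λ₁+λ₂α)] + 2θ[(1-e^{-2λ₁x})/(2λ₁) - (1-e^{-2(λ₁+λ₂α)x})/(2(λ₁+λ₂α))]}. -/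

import Mathlib

open MeasureTheory Real

lemma int_exp_aux (c : ℝ) (hc : c ≠ 0) (x : ℝ) :
    ∫ t in (0:ℝ)..x, Real.exp (-(c*t)) = (1 - Real.exp (-(c*x)))/c := by
  have h : ∀ t ∈ Set.uIcc (0:ℝ) x,
      HasDerivAt (fun t => -(Real.exp (-(c*t))/c)) (Real.exp (-(c*t))) t := by
    intro t _
    have h1 : HasDerivAt (fun t : ℝ => -(c*t)) (-c) t := by
      have h0 := ((hasDerivAt_id t).const_mul c).neg
      simp only [mul_one] at h0
      exact h0
    have h2 : HasDerivAt (fun t => -(Real.exp (-(c*t))/c)) (-(Real.exp (-(c*t)) * -c / c)) t :=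
      ((h1.exp).div_const c).neg
    convert h2 using 1
    field_simp
  rw [intervalIntegral.integral_eq_sub_of_hasDerivAt h
    ((Real.continuous_exp.comp (by continuity)).intervalIntegrable 0 x)]
  simp
  field_simp
  ring

lemma ii_kexp (k c a b : ℝ) :
    IntervalIntegrable (fun t => k * Real.exp (-(c*t))) volume a b :=
  Continuous.intervalIntegrable (by continuity) a b

lemma int_kexp (k c : ℝ) (hc : c ≠ 0) (x : ℝ) :
    ∫ t in (0:ℝ)..x, k * Real.exp (-(c*t)) = k * ((1 - Real.exp (-(c*x)))/c) := by
  rw [intervalIntegral.integral_const_mul, int_exp_aux c hc]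

lemma int_two (k₁ k₂ c₁ c₂ : ℝ) (h₁ : c₁ ≠ 0) (h₂ : c₂ ≠ 0) (x : ℝ) :
    ∫ t in (0:ℝ)..x, (k₁ * Real.exp (-(c₁*t)) + k₂ * Real.exp (-(c₂*t)))
      = k₁ * ((1 - Real.exp (-(c₁*x)))/c₁) + k₂ * ((1 - Real.exp (-(c₂*x)))/c₂) := by
  rw [intervalIntegral.integral_add (ii_kexp k₁ c₁ 0 x) (ii_kexp k₂ c₂ 0 x),
    int_kexp k₁ c₁ h₁, int_kexp k₂ c₂ h₂]

lemma int_six (k₁ k₂ k₃ k₄ k₅ k₆ c₁ c₂ c₃ c₄ c₅ c₆ : ℝ)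
    (h₁ : c₁ ≠ 0) (h₂ : c₂ ≠ 0) (h₃ : c₃ ≠ 0) (h₄ : c₄ ≠ 0) (h₅ : c₅ ≠ 0)
    (h₆ : c₆ ≠ 0) (x : ℝ) :
    ∫ t in (0:ℝ)..x, (k₁ * Real.exp (-(c₁*t)) + k₂ * Real.exp (-(c₂*t))
        + k₃ * Real.exp (-(c₃*t)) + k₄ * Real.exp (-(c₄*t))
        + k₅ * Real.exp (-(c₅*t)) + k₆ * Real.exp (-(c₆*t)))
      = k₁ * ((1 - Real.exp (-(c₁*x)))/c₁) + k₂ * ((1 - Real.exp (-(c₂*x)))/c₂)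
        + k₃ * ((1 - Real.exp (-(c₃*x)))/c₃) + k₄ * ((1 - Real.exp (-(c₄*x)))/c₄)
        + k₅ * ((1 - Real.exp (-(c₅*x)))/c₅) + k₆ * ((1 - Real.exp (-(c₆*x)))/c₆) := by
  rw [intervalIntegral.integral_add
      (((((ii_kexp k₁ c₁ 0 x).add (ii_kexp k₂ c₂ 0 x)).add (ii_kexp k₃ c₃ 0 x)).add
        (ii_kexp k₄ c₄ 0 x)).add (ii_kexp k₅ c₅ 0 x)) (ii_kexp k₆ c₆ 0 x),
    intervalIntegral.integral_add
      ((((ii_kexp k₁ c₁ 0 x).add (ii_kexp k₂ c₂ 0 x)).add (ii_kexp k₃ c₃ 0 x)).add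
        (ii_kexp k₄ c₄ 0 x)) (ii_kexp k₅ c₅ 0 x),
    intervalIntegral.integral_add
      (((ii_kexp k₁ c₁ 0 x).add (ii_kexp k₂ c₂ 0 x)).add (ii_kexp k₃ c₃ 0 x))
      (ii_kexp k₄ c₄ 0 x),
    intervalIntegral.integral_add
      ((ii_kexp k₁ c₁ 0 x).add (ii_kexp k₂ c₂ 0 x)) (ii_kexp k₃ c₃ 0 x),
    intervalIntegral.integral_add (ii_kexp k₁ c₁ 0 x) (ii_kexp k₂ c₂ 0 x),
    int_kexp k₁ c₁ h₁, int_kexp k₂ c₂ h₂, int_kexp k₃ c₃ h₃, int_kexp k₄ c₄ h₄,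
    int_kexp k₅ c₅ h₅, int_kexp k₆ c₆ h₆]

theorem gwed_hidden_truncation_double_integral
    (l₁ l₂ α θ : ℝ) (hl₁ : 0 < l₁) (hl₂ : 0 < l₂) (hα : 0 < α)
    (hθ : θ ∈ Set.Icc (-1 : ℝ) 1)
    (f : ℝ → ℝ → ℝ)
    (hf : ∀ z y : ℝ, 0 < z → 0 < y →
      f z y = l₁ * l₂ * z * Real.exp (-(l₁ + l₂ * y) * z)
        * (1 + θ * (1 - 2 * Real.exp (-l₁ * z)) * (1 - 2 * Real.exp (-l₂ * y * z)))) :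
    ∀ x : ℝ, 0 < x →
      (∫ z in (0 : ℝ)..x, ∫ y in (0 : ℝ)..α, f z y)
        = l₁ * ((1 + θ) * ((1 - Real.exp (-l₁ * x)) / l₁
              - (1 - Real.exp (-(l₁ + l₂ * α) * x)) / (l₁ + l₂ * α))
            - θ * ((1 - Real.exp (-l₁ * x)) / l₁
              - (1 - Real.exp (-(l₁ + 2 * l₂ * α) * x)) / (l₁ + 2 * l₂ * α))
            - 2 * θ * ((1 - Real.exp (-2 * l₁ * x)) / (2 * l₁)
              - (1 - Real.exp (-(2 * l₁ + l₂ * α) * x)) / (2 * l₁ + l₂ * α))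
            + 2 * θ * ((1 - Real.exp (-2 * l₁ * x)) / (2 * l₁)
              - (1 - Real.exp (-2 * (l₁ + l₂ * α) * x)) / (2 * (l₁ + l₂ * α)))) := by
  intro x hx
  have hinner : ∀ z : ℝ, 0 < z → (∫ y in (0:ℝ)..α, f z y)
      = l₁ * ((1+θ) * (Real.exp (-(l₁*z)) - Real.exp (-((l₁+l₂*α)*z)))
            - θ * (Real.exp (-(l₁*z)) - Real.exp (-((l₁+2*l₂*α)*z)))
            - 2*θ * (Real.exp (-(2*l₁*z)) - Real.exp (-((2*l₁+l₂*α)*z)))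
            + 2*θ * (Real.exp (-(2*l₁*z)) - Real.exp (-(2*(l₁+l₂*α)*z)))) := by
    intro z hz
    have hcz : l₂ * z ≠ 0 := by positivity
    have hcz2 : 2*(l₂*z) ≠ 0 := by positivity
    have hcongr : (∫ y in (0:ℝ)..α, f z y)
        = ∫ y in (0:ℝ)..α,
            ((l₁*l₂*z*Real.exp (-(l₁*z))*(1+θ*(1-2*Real.exp (-(l₁*z)))))
                * Real.exp (-(l₂*z*y))
            + (l₁*l₂*z*Real.exp (-(l₁*z))*(-(2*θ)*(1-2*Real.exp (-(l₁*z)))))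
                * Real.exp (-(2*(l₂*z)*y))) := by
      apply intervalIntegral.integral_congr_ae
      filter_upwards with y hy
      rw [Set.uIoc_of_le hα.le] at hy
      rw [hf z y hz hy.1]
      have h1 : Real.exp (-(l₁ + l₂*y)*z)
          = Real.exp (-(l₁*z)) * Real.exp (-(l₂*z*y)) := by
        rw [← Real.exp_add]; congr 1; ring
      have h2 : Real.exp (-l₂*y*z) = Real.exp (-(l₂*z*y)) := by congr 1; ring
      have h3 : Real.exp (-l₁*z) = Real.exp (-(l₁*z)) := by congr 1; ring
      have h4 : Real.exp (-(2*(l₂*z)*y))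
          = Real.exp (-(l₂*z*y)) * Real.exp (-(l₂*z*y)) := by
        rw [← Real.exp_add]; congr 1; ring
      rw [h1, h2, h3, h4]; ring
    rw [hcongr, int_two _ _ _ _ hcz hcz2]
    have e2 : Real.exp (-((l₁+l₂*α)*z))
        = Real.exp (-(l₁*z)) * Real.exp (-(l₂*z*α)) := by
      rw [← Real.exp_add]; congr 1; ring
    have e3 : Real.exp (-((l₁+2*l₂*α)*z))
        = Real.exp (-(l₁*z)) * (Real.exp (-(l₂*z*α)) * Real.exp (-(l₂*z*α))) := by
      rw [← Real.exp_add, ← Real.exp_add]; congr 1; ring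
    have e4 : Real.exp (-(2*l₁*z)) = Real.exp (-(l₁*z)) * Real.exp (-(l₁*z)) := by
      rw [← Real.exp_add]; congr 1; ring
    have e5 : Real.exp (-((2*l₁+l₂*α)*z))
        = Real.exp (-(l₁*z)) * Real.exp (-(l₁*z)) * Real.exp (-(l₂*z*α)) := by
      rw [← Real.exp_add, ← Real.exp_add]; congr 1; ring
    have e6 : Real.exp (-(2*(l₁+l₂*α)*z))
        = Real.exp (-(l₁*z)) * Real.exp (-(l₁*z)) * Real.exp (-(l₂*z*α))
            * Real.exp (-(l₂*z*α)) := by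
      rw [← Real.exp_add, ← Real.exp_add, ← Real.exp_add]; congr 1; ring
    have e7 : Real.exp (-(2*(l₂*z)*α))
        = Real.exp (-(l₂*z*α)) * Real.exp (-(l₂*z*α)) := by
      rw [← Real.exp_add]; congr 1; ring
    rw [e2, e3, e4, e5, e6, e7]
    field_simp
    ring
  have houter : (∫ z in (0:ℝ)..x, ∫ y in (0:ℝ)..α, f z y)
      = ∫ z in (0:ℝ)..x,
          (l₁ * Real.exp (-(l₁*z)) + (-(l₁*(1+θ))) * Real.exp (-((l₁+l₂*α)*z))
            + (l₁*θ) * Real.exp (-((l₁+2*l₂*α)*z)) + (0:ℝ) * Real.exp (-(2*l₁*z))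
            + (2*l₁*θ) * Real.exp (-((2*l₁+l₂*α)*z))
            + (-(2*l₁*θ)) * Real.exp (-(2*(l₁+l₂*α)*z))) := by
    apply intervalIntegral.integral_congr_ae
    filter_upwards with z hz
    rw [Set.uIoc_of_le hx.le] at hz
    rw [hinner z hz.1]
    ring
  have h1 : l₁ ≠ 0 := ne_of_gt hl₁
  have h2 : l₁ + l₂*α ≠ 0 := by positivity
  have h3 : l₁ + 2*l₂*α ≠ 0 := by positivity
  have h4 : (2:ℝ)*l₁ ≠ 0 := by positivity
  have h5 : 2*l₁ + l₂*α ≠ 0 := by positivity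
  have h6 : 2*(l₁ + l₂*α) ≠ 0 := by positivity
  rw [houter, int_six l₁ (-(l₁*(1+θ))) (l₁*θ) 0 (2*l₁*θ) (-(2*l₁*θ))
    l₁ (l₁+l₂*α) (l₁+2*l₂*α) (2*l₁) (2*l₁+l₂*α) (2*(l₁+l₂*α)) h1 h2 h3 h4 h5 h6 x]
  simp only [neg_mul]
  field_simp
  ring
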